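/- For every f ∈ C(I), the set {K ∈ K^ℕ : (K, f) ∈ 𝒳} is invariant under finite permutations; that is, if (K, f) ∈ 𝒳 and σ is a permutation of ℕ fixing all but finitely many positive integers, then ((K_{σ(n)})_{n∈ℕ}, f) ∈ 𝒳. -/
import Mathlib


open Filter Topology TopologicalSpace Set MeasureTheory

noncomputable section

/-- The unit interval `I = [0,1]` as a type. -/
abbrev UI : Type := ↥(Set.Icc (0:ℝ) 1)

/-- The space `𝒦` of closed subsets of `I`, with the (extended) Hausdorff metric topology. -/
abbrev KSp : Type := TopologicalSpace.Closeds UI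

/-- The open `r`-neighbourhood of a set `A` within `I`. -/
def nbhd (A : Set UI) (r : ℝ) : Set UI := ⋃ a ∈ A, Metric.ball a r

/-- Upper right Dini derivative `D⁺f(x)`, as an extended real. -/
def DiniSupR (f : UI → ℝ) (x : UI) : EReal :=
  Filter.limsup (fun y : UI => (((f y - f x) / ((y : ℝ) - (x : ℝ))) : EReal)) (𝓝[>] x)

/-- Lower right Dini derivative `D₊f(x)`. -/
def DiniInfR (f : UI → ℝ) (x : UI) : EReal :=
  Filter.liminf (fun y : UI => (((f y - f x) / ((y : ℝ) - (x : ℝ))) : EReal)) (𝓝[>] x)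

/-- Upper left Dini derivative `D⁻f(x)`. -/
def DiniSupL (f : UI → ℝ) (x : UI) : EReal :=
  Filter.limsup (fun y : UI => (((f y - f x) / ((y : ℝ) - (x : ℝ))) : EReal)) (𝓝[<] x)

/-- Lower left Dini derivative `D₋f(x)`. -/
def DiniInfL (f : UI → ℝ) (x : UI) : EReal :=
  Filter.liminf (fun y : UI => (((f y - f x) / ((y : ℝ) - (x : ℝ))) : EReal)) (𝓝[<] x)

/-- `x` is a knot point of `f`. -/
def IsKnotPoint (f : UI → ℝ) (x : UI) : Prop :=
  (0 < (x:ℝ) ∧ (x:ℝ) < 1 ∧ DiniSupR f x = ⊤ ∧ DiniSupL f x = ⊤ ∧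
      DiniInfR f x = ⊥ ∧ DiniInfL f x = ⊥) ∨
  ((x:ℝ) = 0 ∧ DiniSupR f x = ⊤ ∧ DiniInfR f x = ⊥) ∨
  ((x:ℝ) = 1 ∧ DiniSupL f x = ⊤ ∧ DiniInfL f x = ⊥)

/-- `N(f)`: the set of points of `I` that are not knot points of `f`. -/
def NonKnot (f : UI → ℝ) : Set UI := {x | ¬ IsKnotPoint f x}

/-- `S` is an `Fσ` subset of `I`. -/
def IsFsigma (S : Set UI) : Prop :=
  ∃ F : ℕ → Set UI, (∀ n, IsClosed (F n)) ∧ S = ⋃ n, F n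

/-- `N⁺(f,a)`. -/
def NplusUp (f : UI → ℝ) (a : ℝ) : Set UI :=
  {x | (x:ℝ) ≤ 1 - 2^(-a) ∧
    ∀ y : UI, (x:ℝ) ≤ (y:ℝ) → (y:ℝ) ≤ (x:ℝ) + 2^(-a) →
      f y - f x ≤ a * ((y:ℝ) - (x:ℝ))}

/-- `N₊(f,a)`. -/
def NplusLow (f : UI → ℝ) (a : ℝ) : Set UI :=
  {x | (x:ℝ) ≤ 1 - 2^(-a) ∧
    ∀ y : UI, (x:ℝ) ≤ (y:ℝ) → (y:ℝ) ≤ (x:ℝ) + 2^(-a) →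
      -a * ((y:ℝ) - (x:ℝ)) ≤ f y - f x}

/-- `N⁻(f,a)`. -/
def NminusUp (f : UI → ℝ) (a : ℝ) : Set UI :=
  {x | 2^(-a) ≤ (x:ℝ) ∧
    ∀ y : UI, (x:ℝ) - 2^(-a) ≤ (y:ℝ) → (y:ℝ) ≤ (x:ℝ) →
      a * ((y:ℝ) - (x:ℝ)) ≤ f y - f x}

/-- `N₋(f,a)`. -/
def NminusLow (f : UI → ℝ) (a : ℝ) : Set UI :=
  {x | 2^(-a) ≤ (x:ℝ) ∧
    ∀ y : UI, (x:ℝ) - 2^(-a) ≤ (y:ℝ) → (y:ℝ) ≤ (x:ℝ) →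
      f y - f x ≤ -a * ((y:ℝ) - (x:ℝ))}

/-- `N̂(f,a) = N⁺(f,a) ∪ N₋(f,a)`. -/
def Nhat (f : UI → ℝ) (a : ℝ) : Set UI := NplusUp f a ∪ NminusLow f a

/-- `Ň(f,a) = N₊(f,a) ∪ N⁻(f,a)`. -/
def Ncheck (f : UI → ℝ) (a : ℝ) : Set UI := NplusLow f a ∪ NminusUp f a

/-- `N(f,a)`. -/
def NN (f : UI → ℝ) (a : ℝ) : Set UI := Nhat f a ∪ Ncheck f a

/-- `f : I → ℝ` is continuously differentiable on `I`. -/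
def IsC1 (f : UI → ℝ) : Prop :=
  ContDiffOn ℝ 1 (Set.IccExtend (zero_le_one : (0:ℝ) ≤ 1) f) (Set.Icc (0:ℝ) 1)

/-- `φ` is a bump function of height `h` and width `w` located at `H1` and `H2`. -/
def IsBump (φ : C(UI, ℝ)) (h w : ℝ) (H1 H2 : Set UI) : Prop :=
  IsC1 ⇑φ ∧ ‖φ‖ = h ∧ (∀ x ∈ H1, φ x = h) ∧ (∀ x ∈ H2, φ x = -h) ∧
  {x : UI | 0 < φ x} ⊆ nbhd H1 w ∧ {x : UI | φ x < 0} ⊆ nbhd H2 w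

/-- The shifted sequence `n^k`. -/
def shiftSeq (n : ℕ → ℕ) (k : ℕ) : ℕ → ℕ := fun j => n (j + k)

/-- The index set `A_j^m(n) = [n_j] ∪ ⋃_{i=j}^{m-1} {n_i+1, …, n_i+j-1}`. -/
def Aset (n : ℕ → ℕ) (j m : ℕ) : Set ℕ :=
  Set.Icc 1 (n j) ∪ ⋃ i ∈ Set.Ico j m, Set.Icc (n i + 1) (n i + (j - 1))

/-- `n ∈ Z`: sequence of positive integers with `n_{j+1} ≥ n_j + j`. -/
def memZ (n : ℕ → ℕ) : Prop := ∀ j, 1 ≤ j → 1 ≤ n j ∧ n j + j ≤ n (j + 1)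

/-- `δ ∈ Y`: strictly decreasing sequence in `(0,1)` tending to `0`. -/
def memY (δ : ℕ → ℝ) : Prop :=
  (∀ j, 1 ≤ j → 0 < δ j ∧ δ j < 1) ∧ (∀ j, 1 ≤ j → δ (j + 1) < δ j) ∧
    Filter.Tendsto δ Filter.atTop (𝓝 0)

/-- `a ∈ X`: strictly increasing sequence of positive reals tending to `∞`. -/
def memX (a : ℕ → ℝ) : Prop :=
  (∀ j, 1 ≤ j → 0 < a j) ∧ (∀ j, 1 ≤ j → a j < a (j + 1)) ∧
    Filter.Tendsto a Filter.atTop Filter.atTop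

/-- `K ∈ 𝒮_k(n,δ)`. -/
def memS (K : ℕ → KSp) (n : ℕ → ℕ) (δ : ℕ → ℝ) (k : ℕ) : Prop :=
  ∀ j m, 2 ≤ j → j + 1 ≤ m →
    (⋃ i ∈ Aset (shiftSeq n k) j m \ Aset (shiftSeq n k) j (m - 1), (K i : Set UI))
      ⊆ ⋃ i ∈ Aset (shiftSeq n k) (j - 1) (m - 1), nbhd (K i : Set UI) (δ m)

/-- `(K, f, n, δ, a, b) ∈ 𝒴_k`. -/
def memYk (K : ℕ → KSp) (f : C(UI, ℝ)) (n : ℕ → ℕ) (δ : ℕ → ℝ) (a b : ℕ → ℝ)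
    (k : ℕ) : Prop :=
  memZ n ∧ memY δ ∧ memX a ∧ memX b ∧ memS K n δ k ∧
  ∀ j m, 1 ≤ j → j ≤ m →
    NN ⇑f (a j) ⊆ (⋃ i ∈ Aset (shiftSeq n k) j m, nbhd (K i : Set UI) (δ m)) ∧
    (⋃ i ∈ Aset n j m, (K i : Set UI)) ⊆ nbhd (NN ⇑f (b j)) (δ m)

/-- `(K, f) ∈ 𝒳`: the projection of `𝒴 = ⋃_k 𝒴_k` to `𝒦^ℕ × C(I)`. -/
def memXcal (K : ℕ → KSp) (f : C(UI, ℝ)) : Prop :=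
  ∃ n δ a b k, memYk K f n δ a b k

section AuxPerm

lemma memZ_mono {n : ℕ → ℕ} (hn : memZ n) {i i' : ℕ} (h1 : 1 ≤ i) (h2 : i ≤ i') :
    n i ≤ n i' := by
  induction i' with
  | zero => omega
  | succ m ih =>
    by_cases h : i ≤ m
    · have h2' := ih h
      have := (hn m (by omega)).2
      omega
    · have hie : i = m + 1 := by omega
      subst hie
      exact le_rfl

lemma memY_anti {δ : ℕ → ℝ} (hδ : memY δ) {m m' : ℕ} (h1 : 1 ≤ m) (h2 : m ≤ m') :
    δ m' ≤ δ m := by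
  induction m' with
  | zero => exact absurd h2 (by omega)
  | succ m0 ih =>
    by_cases h : m ≤ m0
    · exact (le_of_lt (hδ.2.1 m0 (by omega))).trans (ih h)
    · have he : m = m0 + 1 := by omega
      rw [he]

lemma memZ_ge {n : ℕ → ℕ} (hn : memZ n) : ∀ s, s + 1 ≤ n (s + 1) := by
  intro s
  induction s with
  | zero => exact (hn 1 le_rfl).1
  | succ t ih =>
    have := (hn (t + 1) (by omega)).2
    omega

lemma memZ_shift {n : ℕ → ℕ} (hn : memZ n) (s : ℕ) : memZ (shiftSeq n s) := by
  intro j hj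
  have h1 := (hn (j + s) (by omega)).1
  have h2 := (hn (j + s) (by omega)).2
  constructor
  · exact h1
  · show n (j + s) + j ≤ n (j + 1 + s)
    have he : j + 1 + s = j + s + 1 := by omega
    rw [he]
    omega

lemma memX_shift {b : ℕ → ℝ} (hb : memX b) (s : ℕ) : memX (fun j => b (j + s)) := by
  refine ⟨fun j hj => hb.1 (j + s) (by omega), fun j hj => ?_, ?_⟩
  · show b (j + s) < b (j + 1 + s)
    have he : j + 1 + s = j + s + 1 := by omega
    rw [he]
    exact hb.2.1 (j + s) (by omega)
  · exact hb.2.2.comp (Filter.tendsto_add_atTop_nat s)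

lemma nbhd_mono {A : Set UI} {r r' : ℝ} (h : r ≤ r') : nbhd A r ⊆ nbhd A r' :=
  Set.iUnion₂_mono fun _ _ => Metric.ball_subset_ball h

lemma mem_Aset_iff {p : ℕ → ℕ} {j m x : ℕ} :
    x ∈ Aset p j m ↔
      (1 ≤ x ∧ x ≤ p j) ∨
        ∃ i, (j ≤ i ∧ i < m) ∧ (p i + 1 ≤ x ∧ x ≤ p i + (j - 1)) := by
  constructor
  · intro h
    rcases (Set.mem_union _ _ _).mp h with h | h
    · exact Or.inl (Set.mem_Icc.mp h)
    · rcases Set.mem_iUnion₂.mp h with ⟨i, hi, hx⟩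
      exact Or.inr ⟨i, Set.mem_Ico.mp hi, Set.mem_Icc.mp hx⟩
  · rintro (h | ⟨i, hi, hx⟩)
    · exact Set.mem_union_left _ (Set.mem_Icc.mpr h)
    · exact Set.mem_union_right _
        (Set.mem_iUnion₂.mpr ⟨i, Set.mem_Ico.mpr hi, Set.mem_Icc.mpr hx⟩)

lemma Aset_mono {p : ℕ → ℕ} {j m m' : ℕ} (h : m ≤ m') : Aset p j m ⊆ Aset p j m' := by
  intro x hx
  rw [mem_Aset_iff] at hx ⊢
  rcases hx with h1 | ⟨i, hi, hb⟩
  · exact Or.inl h1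
  · exact Or.inr ⟨i, ⟨hi.1, by omega⟩, hb⟩

lemma Aset_sub_of_shift {p q : ℕ → ℕ} {s j m : ℕ} (hp : memZ p)
    (hq : ∀ i, q i = p (i + s)) (hj : 1 ≤ j) :
    Aset p j (m + s) ⊆ Aset q j m := by
  intro x hx
  rw [mem_Aset_iff] at hx ⊢
  rcases hx with ⟨h1, h2⟩ | ⟨i, ⟨hji, him⟩, hb1, hb2⟩
  · refine Or.inl ⟨h1, ?_⟩
    rw [hq j]
    exact h2.trans (memZ_mono hp hj (by omega))
  · by_cases h : j + s ≤ i
    · refine Or.inr ⟨i - s, ⟨by omega, by omega⟩, ?_⟩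
      rw [hq (i - s), show i - s + s = i from by omega]
      omega
    · refine Or.inl ⟨by omega, ?_⟩
      rw [hq j]
      have h1 : p i + i ≤ p (i + 1) := (hp i (by omega)).2
      have h2 : p (i + 1) ≤ p (j + s) := memZ_mono hp (by omega) (by omega)
      omega

lemma Aset_shift_sub {p q : ℕ → ℕ} {s j m : ℕ}
    (hq : ∀ i, q i = p (i + s)) (hj : 1 ≤ j) :
    Aset q j m ⊆ Aset p (j + s) (m + s) := by
  intro x hx
  rw [mem_Aset_iff] at hx ⊢
  rcases hx with ⟨h1, h2⟩ | ⟨i, ⟨hji, him⟩, hb1, hb2⟩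
  · rw [hq j] at h2
    exact Or.inl ⟨h1, h2⟩
  · rw [hq i] at hb1 hb2
    exact Or.inr ⟨i + s, ⟨by omega, by omega⟩, by omega, by omega⟩

lemma Aset_diff_sub_block {q : ℕ → ℕ} {j m : ℕ} (hm : 1 ≤ m) {x : ℕ}
    (hx : x ∈ Aset q j m \ Aset q j (m - 1)) :
    x ∈ Set.Icc (q (m - 1) + 1) (q (m - 1) + (j - 1)) := by
  obtain ⟨hx1, hx2⟩ := hx
  rw [mem_Aset_iff] at hx1
  rw [Set.mem_Icc]
  rcases hx1 with h1 | ⟨i, ⟨hji, him⟩, hb⟩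
  · exact absurd (mem_Aset_iff.mpr (Or.inl h1)) hx2
  · by_cases h : i < m - 1
    · exact absurd (mem_Aset_iff.mpr (Or.inr ⟨i, ⟨hji, h⟩, hb⟩)) hx2
    · have hi : i = m - 1 := by omega
      subst hi
      exact hb

lemma block_sub_diff {p : ℕ → ℕ} {j t : ℕ} (hp : memZ p) (hj : 1 ≤ j) (hjt : j ≤ t)
    {x : ℕ} (hx : x ∈ Set.Icc (p t + 1) (p t + (j - 1))) :
    x ∈ Aset p j (t + 1) \ Aset p j t := by
  rw [Set.mem_Icc] at hx
  constructor
  · exact mem_Aset_iff.mpr (Or.inr ⟨t, ⟨hjt, by omega⟩, hx⟩)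
  · intro hmem
    rw [mem_Aset_iff] at hmem
    rcases hmem with ⟨h1, h2⟩ | ⟨i, ⟨hji, hit⟩, hb⟩
    · have := memZ_mono hp hj hjt
      omega
    · have h1 : p i + i ≤ p (i + 1) := (hp i (by omega)).2
      have h2 : p (i + 1) ≤ p t := memZ_mono hp (by omega) (by omega)
      omega

lemma perm_symm_mem {σ : Equiv.Perm ℕ} {N : ℕ} (hM : ∀ i, σ i ≠ i → 1 ≤ i ∧ i ≤ N)
    {q : ℕ → ℕ} {j m : ℕ} (hN : N ≤ q j) {i : ℕ} (hi : i ∈ Aset q j m) :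
    σ.symm i ∈ Aset q j m := by
  by_cases h : σ.symm i = i
  · rwa [h]
  · have h2 : σ (σ.symm i) ≠ σ.symm i := by
      rw [Equiv.apply_symm_apply]
      exact fun he => h he.symm
    have h3 := hM _ h2
    exact mem_Aset_iff.mpr (Or.inl ⟨h3.1, h3.2.trans hN⟩)

lemma perm_apply_mem {σ : Equiv.Perm ℕ} {N : ℕ} (hM : ∀ i, σ i ≠ i → 1 ≤ i ∧ i ≤ N)
    {q : ℕ → ℕ} {j m : ℕ} (hN : N ≤ q j) {i : ℕ} (hi : i ∈ Aset q j m) :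
    σ i ∈ Aset q j m := by
  by_cases h : σ i = i
  · rwa [h]
  · have h2 : σ (σ i) ≠ σ i := fun he => h (σ.injective he)
    have h3 := hM _ h2
    exact mem_Aset_iff.mpr (Or.inl ⟨h3.1, h3.2.trans hN⟩)

end AuxPerm

set_option maxHeartbeats 1000000 in
/-- For each `f ∈ C(I)`, the set `{K : (K,f) ∈ 𝒳}` is invariant under finite
permutations (of the positive integers). -/
theorem memXcal_invariant_perm (f : C(UI, ℝ)) (K : ℕ → KSp) (hK : memXcal K f)
    (σ : Equiv.Perm ℕ) (hσ : {i | σ i ≠ i}.Finite) (hσ0 : σ 0 = 0) :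
    memXcal (fun i => K (σ i)) f := by
  obtain ⟨n, δ, a, b, k, hZ, hY, hXa, hXb, hS, hmain⟩ := hK
  obtain ⟨s, hB⟩ := hσ.bddAbove
  have hM : ∀ i, σ i ≠ i → 1 ≤ i ∧ i ≤ n (s + 1) := by
    intro i hi
    have h1 : 1 ≤ i := by
      rcases i with _ | i
      · exact absurd hσ0 hi
      · omega
    have h2 : i ≤ s := hB hi
    have h3 := memZ_ge hZ s
    omega
  have hpZ : memZ (shiftSeq n k) := memZ_shift hZ k
  have hq : ∀ i, shiftSeq (fun j => n (j + s)) k i = shiftSeq n k (i + s) :=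
    fun i => congrArg n (by omega)
  have hn'q : ∀ i : ℕ, (fun j => n (j + s)) i = n (i + s) := fun _ => rfl
  refine ⟨fun j => n (j + s), δ, a, fun j => b (j + s), k, memZ_shift hZ s, hY, hXa,
    memX_shift hXb s, ?_, ?_⟩
  · -- memS
    intro j m hj hm
    intro x hx
    simp only [Set.mem_iUnion, exists_prop] at hx
    obtain ⟨i, hiD, hxK⟩ := hx
    have hfix : σ i = i := by
      by_contra hne
      have h3 := hM i hne
      have hqj : n (s + 1) ≤ shiftSeq (fun j => n (j + s)) k j := by
        rw [hq j]
        show n (s + 1) ≤ n (j + s + k)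
        exact memZ_mono hZ (by omega) (by omega)
      exact hiD.2 (mem_Aset_iff.mpr (Or.inl ⟨h3.1, h3.2.trans hqj⟩))
    rw [hfix] at hxK
    have hb1 := Aset_diff_sub_block (by omega : 1 ≤ m) hiD
    have heq : shiftSeq (fun j => n (j + s)) k (m - 1) = shiftSeq n k (m + s - 1) :=
      congrArg n (by omega)
    rw [heq] at hb1
    have hb2 := block_sub_diff hpZ (by omega : 1 ≤ j) (by omega : j ≤ m + s - 1) hb1
    rw [show m + s - 1 + 1 = m + s from by omega] at hb2
    have hS' := hS j (m + s) hj (by omega)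
    have hx2 : x ∈ ⋃ i ∈ Aset (shiftSeq n k) (j - 1) (m + s - 1),
        nbhd (K i : Set UI) (δ (m + s)) := by
      apply hS'
      simp only [Set.mem_iUnion, exists_prop]
      exact ⟨i, hb2, hxK⟩
    simp only [Set.mem_iUnion, exists_prop] at hx2
    obtain ⟨i', hi', hxi'⟩ := hx2
    rw [show m + s - 1 = (m - 1) + s from by omega] at hi'
    have hi'Q : i' ∈ Aset (shiftSeq (fun j => n (j + s)) k) (j - 1) (m - 1) :=
      Aset_sub_of_shift hpZ hq (by omega) hi'
    have hNle : n (s + 1) ≤ shiftSeq (fun j => n (j + s)) k (j - 1) := by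
      rw [hq (j - 1)]
      show n (s + 1) ≤ n (j - 1 + s + k)
      exact memZ_mono hZ (by omega) (by omega)
    simp only [Set.mem_iUnion, exists_prop]
    refine ⟨σ.symm i', perm_symm_mem hM hNle hi'Q, ?_⟩
    have hfin : x ∈ nbhd (K i' : Set UI) (δ m) :=
      nbhd_mono (memY_anti hY (by omega) (by omega)) hxi'
    rw [Equiv.apply_symm_apply]
    exact hfin
  · -- main two inclusions
    intro j m hj hjm
    constructor
    · intro x hx
      have hx1 := (hmain j m hj hjm).1 hx
      simp only [Set.mem_iUnion, exists_prop] at hx1 ⊢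
      obtain ⟨i, hi, hxi⟩ := hx1
      have hi2 : i ∈ Aset (shiftSeq (fun j => n (j + s)) k) j m :=
        Aset_sub_of_shift hpZ hq hj (Aset_mono (by omega) hi)
      have hNle : n (s + 1) ≤ shiftSeq (fun j => n (j + s)) k j := by
        rw [hq j]
        show n (s + 1) ≤ n (j + s + k)
        exact memZ_mono hZ (by omega) (by omega)
      refine ⟨σ.symm i, perm_symm_mem hM hNle hi2, ?_⟩
      rw [Equiv.apply_symm_apply]
      exact hxi
    · intro x hx
      simp only [Set.mem_iUnion, exists_prop] at hx
      obtain ⟨i, hi, hxi⟩ := hx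
      have hNle : n (s + 1) ≤ (fun j => n (j + s)) j := by
        show n (s + 1) ≤ n (j + s)
        exact memZ_mono hZ (by omega) (by omega)
      have hi2 : σ i ∈ Aset (fun j => n (j + s)) j m := perm_apply_mem (q := fun j => n (j + s)) (j := j) (m := m) hM hNle hi
      have hi3 : σ i ∈ Aset n (j + s) (m + s) := Aset_shift_sub hn'q hj hi2
      have hx2 := (hmain (j + s) (m + s) (by omega) (by omega)).2 (by
        simp only [Set.mem_iUnion, exists_prop]
        exact ⟨σ i, hi3, hxi⟩)
      exact nbhd_mono (memY_anti hY (by omega) (by omega)) hx2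

end
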